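/- Fix k ≥ 1. Every update procedure of ordinal ω^k has a finite zero: if U is a map sending each family f = (f_v)_{v ∈ ℕ^k} of functions ℕ → ℕ (indexed by k-tuples of natural numbers ordered lexicographically) to an element of (ℕ^k × ℕ × ℕ) ∪ {∅}, U is continuous, and U satisfies the update condition with respect to the lexicographic order on ℕ^k, then there exists f with {(v,n) : f_v n ≠ 0} finite and U f = ∅ (Zero Theorem for update procedures of ordinal ω^k). -/

import Mathlib

/-- The lexicographic (strict) order on `ℕ^k`. -/
def LexLt {k : ℕ} (v w : Fin k → ℕ) : Prop :=
  ∃ i : Fin k, (∀ j : Fin k, j < i → v j = w j) ∧ v i < w i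

namespace ZT

variable {K : ℕ}

abbrev Row (K : ℕ) := Fin (K + 1) → ℕ
abbrev Fam (K : ℕ) := Row K → ℕ → ℕ

theorem lex_wf : WellFounded (LexLt : Row K → Row K → Prop) :=
  Pi.Lex.wellFounded _ fun _ => (Nat.lt_wfRel).wf

theorem lex_trichotomy (a b : Row K) : LexLt a b ∨ a = b ∨ LexLt b a :=
  by
    have h : ¬ LexLt a b → ¬ LexLt b a → a = b :=
      (Pi.isTrichotomous_lex _ _ wellFounded_lt).trichotomous a b
    by_cases h1 : LexLt a b
    · exact Or.inl h1
    by_cases h2 : LexLt b a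
    · exact Or.inr (Or.inr h2)
    exact Or.inr (Or.inl (h h1 h2))

theorem lex_trans {a b c : Row K} (h1 : LexLt a b) (h2 : LexLt b c) : LexLt a c := by
  obtain ⟨i, hi, hi2⟩ := h1
  obtain ⟨j, hj, hj2⟩ := h2
  rcases lt_trichotomy i j with H | rfl | H
  · exact ⟨i, fun l hl => (hi l hl).trans (hj l (hl.trans H)), (hj i H) ▸ hi2⟩
  · exact ⟨i, fun l hl => (hi l hl).trans (hj l hl), hi2.trans hj2⟩
  · exact ⟨j, fun l hl => (hi l (hl.trans H)).trans (hj l hl), (hi j H).symm ▸ hj2⟩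

theorem lex_irrefl (a : Row K) : ¬ LexLt a a := by
  rintro ⟨i, _, h⟩; exact lt_irrefl _ h

theorem lex_asymm {a b : Row K} (h : LexLt a b) : ¬ LexLt b a :=
  fun h' => lex_irrefl a (lex_trans h h')

/-- `a ≤ b` in the lexicographic order. -/
def LexLe (a b : Row K) : Prop := a = b ∨ LexLt a b

theorem lexle_refl (a : Row K) : LexLe a a := Or.inl rfl

theorem lexle_trans {a b c : Row K} (h1 : LexLe a b) (h2 : LexLe b c) : LexLe a c := by
  rcases h1 with rfl | h1
  · exact h2
  · rcases h2 with rfl | h2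
    · exact Or.inr h1
    · exact Or.inr (lex_trans h1 h2)

theorem lexle_trans_lt {a b c : Row K} (h1 : LexLe a b) (h2 : LexLt b c) : LexLt a c := by
  rcases h1 with rfl | h1
  · exact h2
  · exact lex_trans h1 h2

theorem lex_lt_of_not_le {a b : Row K} (h : ¬ LexLe b a) : LexLt a b := by
  rcases lex_trichotomy a b with H | rfl | H
  · exact H
  · exact absurd (lexle_refl a) h
  · exact absurd (Or.inr H) h

theorem not_lexlt_zero (a : Row K) : ¬ LexLt a (fun _ => 0) := by
  rintro ⟨i, _, h⟩; exact Nat.not_lt_zero _ h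

theorem ne_zero_of_lexlt {a b : Row K} (h : LexLt a b) : b ≠ (fun _ => 0) := by
  rintro rfl; exact not_lexlt_zero a h

end ZT

namespace ZT
variable {K : ℕ}

/-! ### Successor structure -/

/-- Lexicographic successor of a row: bump the last coordinate. -/
def rsucc (v : Row K) : Row K := Function.update v (Fin.last K) (v (Fin.last K) + 1)

theorem rsucc_last (v : Row K) : rsucc v (Fin.last K) = v (Fin.last K) + 1 :=
  Function.update_self _ _ _

theorem rsucc_ne_last (v : Row K) {j : Fin (K+1)} (hj : j ≠ Fin.last K) :
    rsucc v j = v j := Function.update_of_ne hj _ _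

theorem lt_rsucc (v : Row K) : LexLt v (rsucc v) := by
  refine ⟨Fin.last K, fun j hj => (rsucc_ne_last v (ne_of_lt hj)).symm, ?_⟩
  rw [rsucc_last]; omega

theorem lexlt_rsucc_iff {p w : Row K} : LexLt p (rsucc w) ↔ LexLe p w := by
  constructor
  · rintro ⟨i, hpre, hlt⟩
    by_cases hi : i = Fin.last K
    · subst hi
      rw [rsucc_last] at hlt
      rcases Nat.lt_or_ge (p (Fin.last K)) (w (Fin.last K)) with h | h
      · exact Or.inr ⟨Fin.last K, fun j hj => (hpre j hj).trans (rsucc_ne_last w (ne_of_lt hj)), h⟩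
      · left
        funext j
        rcases lt_or_eq_of_le (Fin.le_last j) with hj | hj
        · exact (hpre j hj).trans (rsucc_ne_last w (ne_of_lt hj))
        · rw [hj]; omega
    · rw [rsucc_ne_last w hi] at hlt
      refine Or.inr ⟨i, fun j hj => ?_, hlt⟩
      refine (hpre j hj).trans (rsucc_ne_last w ?_)
      intro hjl
      exact hi (le_antisymm (Fin.le_last i) (hjl ▸ le_of_lt hj))
  · intro h
    rcases h with rfl | ⟨i, hpre, hlt⟩
    · exact lt_rsucc p
    · refine ⟨i, fun j hj => (hpre j hj).trans (rsucc_ne_last w ?_).symm, ?_⟩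
      · intro hjl
        have := Fin.le_last i
        exact absurd (hjl ▸ hj) (by simp [Fin.lt_iff_val_lt_val, Fin.le_iff_val_le_val] at this ⊢; omega)
      · by_cases hi : i = Fin.last K
        · subst hi; rw [rsucc_last]; omega
        · rwa [rsucc_ne_last w hi]

theorem lexle_of_lt_rsucc {p w : Row K} (h : LexLt p (rsucc w)) : LexLe p w :=
  lexlt_rsucc_iff.1 h

theorem lt_rsucc_of_le {p w : Row K} (h : LexLe p w) : LexLt p (rsucc w) :=
  lexlt_rsucc_iff.2 h

theorem rsucc_mono {p w : Row K} (h : LexLe p w) : LexLe (rsucc p) (rsucc w) := by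
  rcases h with rfl | ⟨i, hpre, hlt⟩
  · exact lexle_refl _
  · right
    by_cases hi : i = Fin.last K
    · subst hi
      exact ⟨Fin.last K, fun j hj => by
        rw [rsucc_ne_last p (ne_of_lt hj), rsucc_ne_last w (ne_of_lt hj)]; exact hpre j hj,
        by rw [rsucc_last, rsucc_last]; omega⟩
    · refine ⟨i, fun j hj => ?_, ?_⟩
      · have hjl : j ≠ Fin.last K := by
          intro hjl
          have := Fin.le_last i
          exact hi (le_antisymm (Fin.le_last i) (hjl ▸ le_of_lt hj))
        rw [rsucc_ne_last p hjl, rsucc_ne_last w hjl]; exact hpre j hj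
      · rw [rsucc_ne_last p hi, rsucc_ne_last w hi]; exact hlt

/-- Predecessor (meaningful when the last coordinate is nonzero). -/
def rpred (v : Row K) : Row K := Function.update v (Fin.last K) (v (Fin.last K) - 1)

theorem rsucc_rpred {v : Row K} (h : v (Fin.last K) ≠ 0) : rsucc (rpred v) = v := by
  funext j
  by_cases hj : j = Fin.last K
  · subst hj
    rw [rsucc_last]
    rw [rpred, Function.update_self]
    omega
  · rw [rsucc_ne_last _ hj, rpred, Function.update_of_ne hj]

theorem rpred_lt {v : Row K} (h : v (Fin.last K) ≠ 0) : LexLt (rpred v) v := by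
  refine ⟨Fin.last K, fun j hj => Function.update_of_ne (ne_of_lt hj) _ _, ?_⟩
  rw [rpred, Function.update_self]; omega

end ZT

namespace ZT
variable {K : ℕ}

/-! ### Cofinal chains at limit rows -/

/-- Largest index where `v` is nonzero (junk value if `v = 0`). -/
noncomputable def lastNZ (v : Row K) : Fin (K+1) :=
  if h : (Finset.univ.filter fun i => v i ≠ 0).Nonempty then
    (Finset.univ.filter fun i => v i ≠ 0).max' h
  else 0

section LastNZ

variable {v : Row K} (hv : v ≠ (fun _ => 0))

include hv

theorem lastNZ_nonempty : (Finset.univ.filter fun i => v i ≠ 0).Nonempty := by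
  have : ∃ i, v i ≠ 0 := by
    by_contra h
    push_neg at h
    exact hv (funext h)
  obtain ⟨i, hi⟩ := this
  exact ⟨i, by simp [hi]⟩

theorem lastNZ_spec : v (lastNZ v) ≠ 0 := by
  rw [lastNZ, dif_pos (lastNZ_nonempty hv)]
  have := (Finset.univ.filter fun i => v i ≠ 0).max'_mem (lastNZ_nonempty hv)
  simpa using this

theorem lastNZ_max {i : Fin (K+1)} (hi : (lastNZ v : ℕ) < (i : ℕ)) : v i = 0 := by
  by_contra h
  have hmem : i ∈ Finset.univ.filter fun i => v i ≠ 0 := by simp [h]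
  have := Finset.le_max' _ i hmem
  rw [lastNZ, dif_pos (lastNZ_nonempty hv)] at hi
  have : (i : ℕ) ≤ ((Finset.univ.filter fun i => v i ≠ 0).max' (lastNZ_nonempty hv) : ℕ) := this
  omega

theorem lastNZ_lt_last (hl : v (Fin.last K) = 0) : (lastNZ v : ℕ) < K := by
  have h1 : lastNZ v ≠ Fin.last K := by
    intro h
    exact lastNZ_spec hv (h ▸ hl)
  have := Fin.le_last (lastNZ v)
  simp only [Fin.le_iff_val_le_val, Fin.val_last] at this
  have h2 : (lastNZ v : ℕ) ≠ K := fun h => h1 (Fin.ext h)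
  omega

end LastNZ

/-- Cofinal chain below a limit row `v`. -/
noncomputable def chainL (v : Row K) (t : ℕ) : Row K := fun i =>
  if (i : ℕ) < (lastNZ v : ℕ) then v i
  else if (i : ℕ) = (lastNZ v : ℕ) then v i - 1
  else if (i : ℕ) = (lastNZ v : ℕ) + 1 then t
  else 0

theorem chainL_lt_j0 {v : Row K} {t : ℕ} {j : Fin (K+1)} (h : (j:ℕ) < (lastNZ v : ℕ)) :
    chainL v t j = v j := by
  simp only [chainL]; rw [if_pos h]

theorem chainL_at_j0 {v : Row K} {t : ℕ} {j : Fin (K+1)} (h : (j:ℕ) = (lastNZ v : ℕ)) :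
    chainL v t j = v j - 1 := by
  simp only [chainL]; rw [if_neg (by omega), if_pos h]

theorem chainL_at_j1 {v : Row K} {t : ℕ} {j : Fin (K+1)} (h : (j:ℕ) = (lastNZ v : ℕ) + 1) :
    chainL v t j = t := by
  simp only [chainL]; rw [if_neg (by omega), if_neg (by omega), if_pos h]

section ChainL

variable {v : Row K} (hv : v ≠ (fun _ => 0)) (hl : v (Fin.last K) = 0)

include hv hl

theorem chainL_rsucc_lt (t : ℕ) : LexLt (rsucc (chainL v t)) v := by
  have hKlt := lastNZ_lt_last hv hl
  refine ⟨lastNZ v, fun j hj => ?_, ?_⟩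
  · have hj' : (j : ℕ) < (lastNZ v : ℕ) := hj
    have hjlast : j ≠ Fin.last K := by
      intro h; subst h
      simp only [Fin.val_last] at hj'; omega
    rw [rsucc_ne_last _ hjlast, chainL_lt_j0 hj']
  · have hlast : lastNZ v ≠ Fin.last K := by
      intro h
      rw [h] at hKlt; simp at hKlt
    rw [rsucc_ne_last _ hlast, chainL_at_j0 rfl]
    have := lastNZ_spec hv
    omega

theorem chainL_lt (t : ℕ) : LexLt (chainL v t) v :=
  lex_trans (lt_rsucc _) (chainL_rsucc_lt hv hl t)

theorem chainL_mono {t t' : ℕ} (h : t ≤ t') : LexLe (chainL v t) (chainL v t') := by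
  rcases Nat.lt_or_ge t t' with hlt | hge
  · right
    have hKlt := lastNZ_lt_last hv hl
    refine ⟨⟨(lastNZ v : ℕ) + 1, by omega⟩, fun j hj => ?_, ?_⟩
    · have hj' : (j : ℕ) < (lastNZ v : ℕ) + 1 := hj
      rcases Nat.lt_or_ge (j:ℕ) (lastNZ v : ℕ) with h1 | h1
      · rw [chainL_lt_j0 h1, chainL_lt_j0 h1]
      · have h1 : (j:ℕ) = (lastNZ v : ℕ) := by omega
        rw [chainL_at_j0 h1, chainL_at_j0 h1]
    · rw [chainL_at_j1 rfl, chainL_at_j1 rfl]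
      exact hlt
  · have : t = t' := by omega
    subst this
    exact lexle_refl _

theorem chainL_cofinal {p : Row K} (hp : LexLt p v) : ∃ t, LexLe p (chainL v t) := by
  have hKlt := lastNZ_lt_last hv hl
  obtain ⟨i, hpre, hlt⟩ := hp
  have hile : (i : ℕ) ≤ (lastNZ v : ℕ) := by
    by_contra h
    push_neg at h
    have : v i = 0 := lastNZ_max hv h
    omega
  rcases Nat.lt_or_ge (i : ℕ) (lastNZ v : ℕ) with hcase | hcase
  · refine ⟨0, Or.inr ⟨i, fun j hj => ?_, ?_⟩⟩
    · have hj' : (j:ℕ) < (i:ℕ) := hj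
      rw [chainL_lt_j0 (by omega)]
      exact hpre j hj
    · rw [chainL_lt_j0 hcase]; exact hlt
  · have hieq : (i : ℕ) = (lastNZ v : ℕ) := by omega
    rcases Nat.lt_or_ge (p i) (v i - 1) with hc2 | hc2
    · refine ⟨0, Or.inr ⟨i, fun j hj => ?_, ?_⟩⟩
      · have hj' : (j:ℕ) < (i:ℕ) := hj
        rw [chainL_lt_j0 (by omega)]
        exact hpre j hj
      · rw [chainL_at_j0 hieq]; exact hc2
    · have hc3 : p i = v i - 1 := by
        have := lastNZ_spec hv
        have hvi : v i ≠ 0 := by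
          have : i = lastNZ v := Fin.ext hieq
          rw [this]; exact lastNZ_spec hv
        omega
      refine ⟨p ⟨(i:ℕ)+1, by omega⟩ + 1, Or.inr ⟨⟨(i:ℕ)+1, by omega⟩, fun j hj => ?_, ?_⟩⟩
      · have hj' : (j:ℕ) < (i:ℕ) + 1 := hj
        rcases Nat.lt_or_ge (j:ℕ) (i:ℕ) with h1 | h1
        · rw [chainL_lt_j0 (by omega)]
          exact hpre j (by exact h1)
        · have h1' : (j:ℕ) = (i:ℕ) := by omega
          have : j = i := Fin.ext h1'
          subst this
          rw [chainL_at_j0 hieq]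
          exact hc3
      · rw [chainL_at_j1 (by simp; omega)]
        omega

end ChainL

/-- Cofinal chain in the whole row space (for the top stage). -/
def chainT (t : ℕ) : Row K := fun i => if (i : ℕ) = 0 then t else 0

theorem chainT_at0 {t : ℕ} {j : Fin (K+1)} (h : (j:ℕ) = 0) : (chainT t : Row K) j = t := by
  simp only [chainT]; rw [if_pos h]

theorem chainT_mono {t t' : ℕ} (h : t ≤ t') : LexLe (chainT t : Row K) (chainT t') := by
  rcases Nat.lt_or_ge t t' with hlt | hge
  · right
    refine ⟨⟨0, by omega⟩, fun j hj => ?_, ?_⟩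
    · have : (j:ℕ) < 0 := hj
      omega
    · rw [chainT_at0 rfl, chainT_at0 rfl]; exact hlt
  · have : t = t' := by omega
    subst this; exact lexle_refl _

theorem chainT_cofinal (p : Row K) : ∃ t, LexLe p (chainT t) := by
  refine ⟨p ⟨0, by omega⟩ + 1, Or.inr ⟨⟨0, by omega⟩, fun j hj => ?_, ?_⟩⟩
  · have : (j:ℕ) < 0 := hj
    omega
  · rw [chainT_at0 rfl]; omega

end ZT

namespace ZT
variable {K : ℕ}

instance (v w : Row K) : Decidable (LexLt v w) :=
  Fintype.decidableExistsFintype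

/-! ### The erase-greedy step and orbits -/

variable (U : Fam K → Option (Row K × ℕ × ℕ))

/-- One step: update the instructed slot and erase everything lex-above. -/
def stepF (f : Fam K) : Fam K :=
  match U f with
  | none => f
  | some q => fun p j =>
      if p = q.1 then (if j = q.2.1 then q.2.2 else f p j)
      else if LexLt p q.1 then f p j else 0

/-- Orbit of the erase-greedy dynamics. -/
def orb (F : Fam K) : ℕ → Fam K
  | 0 => F
  | s + 1 => stepF U (orb F s)

theorem orb_zero (F : Fam K) : orb U F 0 = F := rfl
theorem orb_succ (F : Fam K) (s : ℕ) : orb U F (s+1) = stepF U (orb U F s) := rfl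

theorem orb_add (F : Fam K) (N s : ℕ) : orb U (orb U F N) s = orb U F (N + s) := by
  induction s with
  | zero => rfl
  | succ s ih =>
    rw [orb_succ, ih, ← orb_succ]
    congr 1

variable {U}

theorem stepF_none {f : Fam K} (h : U f = none) : stepF U f = f := by
  unfold stepF; rw [h]

theorem stepF_below {f : Fam K} {v : Row K} {n m : ℕ} (h : U f = some (v, n, m))
    {p : Row K} (hp : LexLt p v) : stepF U f p = f p := by
  funext j
  unfold stepF; rw [h]
  simp only
  rw [if_neg (by rintro rfl; exact lex_irrefl _ hp), if_pos hp]

theorem stepF_above {f : Fam K} {v : Row K} {n m : ℕ} (h : U f = some (v, n, m))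
    {p : Row K} (hp : LexLt v p) : stepF U f p = fun _ => 0 := by
  funext j
  unfold stepF; rw [h]
  simp only
  rw [if_neg (by rintro rfl; exact lex_irrefl _ hp), if_neg (lex_asymm hp)]

theorem stepF_slot {f : Fam K} {v : Row K} {n m : ℕ} (h : U f = some (v, n, m)) :
    stepF U f v n = m := by
  unfold stepF; rw [h]
  simp

theorem stepF_slot_other {f : Fam K} {v : Row K} {n m j : ℕ} (h : U f = some (v, n, m))
    (hj : j ≠ n) : stepF U f v j = f v j := by
  unfold stepF; rw [h]
  simp [hj]

/-- Rows strictly below a bound `b` never change, provided all instructions are not below `b`. -/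
theorem frozen {F : Fam K} {b : Row K}
    (hb : ∀ s v n m, U (orb U F s) = some (v, n, m) → ¬ LexLt v b) :
    ∀ s p, LexLt p b → orb U F s p = F p := by
  intro s
  induction s with
  | zero => intro p _; rfl
  | succ s ih =>
    intro p hp
    rw [orb_succ]
    cases hU : U (orb U F s) with
    | none => rw [stepF_none hU]; exact ih p hp
    | some q =>
      obtain ⟨v, n, m⟩ := q
      have hv : ¬ LexLt v b := hb s v n m hU
      have hpv : LexLt p v := by
        rcases lex_trichotomy p v with h | rfl | h
        · exact h
        · exact absurd hp hv
        · exact absurd (lex_trans h hp) hv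
      rw [stepF_below hU hpv]
      exact ih p hp

/-- Distinct slots: two updates of the same minimal row use distinct slots. -/
theorem distinct_slots
    (hupd : ∀ (f g : Fam K) (v : Row K) (n m h l : ℕ),
      (∀ w : Row K, LexLt w v → f w = g w) →
      U f = some (v, n, m) → g v n = m → U g = some (v, h, l) → h ≠ n)
    {F : Fam K} {w : Row K}
    (hw : ∀ s v n m, U (orb U F s) = some (v, n, m) → ¬ LexLt v w) :
    ∀ b a, a < b → ∀ n m m', U (orb U F a) = some (w, n, m) →
      U (orb U F b) = some (w, n, m') → False := by
  intro b
  induction b using Nat.strong_induction_on with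
  | _ b IH =>
    intro a hab n m m' ha hb'
    -- persistence of slot value from a+1 to b
    have hpers : ∀ t, a < t → t ≤ b → orb U F t w n = m := by
      intro t
      induction t with
      | zero => omega
      | succ t iht =>
        intro h1 h2
        rcases Nat.lt_or_ge a t with hat | hat
        · -- t > a, step from t
          have hvt := iht hat (by omega)
          rw [orb_succ]
          cases hU : U (orb U F t) with
          | none => rw [stepF_none hU]; exact hvt
          | some q =>
            obtain ⟨v', n', m''⟩ := q
            by_cases hv'w : v' = w
            · subst hv'w
              by_cases hn' : n' = n
              · subst hn'
                exact (IH t (by omega) a hat n' m m'' ha hU).elim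
              · rw [stepF_slot_other hU (fun h => hn' h.symm)]; exact hvt
            · have : LexLt w v' := by
                rcases lex_trichotomy v' w with h | h | h
                · exact absurd h (hw t v' n' m'' hU)
                · exact absurd h hv'w
                · exact h
              rw [stepF_below hU this]; exact hvt
        · -- t = a
          have : t = a := by omega
          subst this
          rw [orb_succ, stepF_slot ha]
    have hval : orb U F b w n = m := hpers b (by omega) (le_refl b)
    have hagree : ∀ q, LexLt q w → orb U F a q = orb U F b q := by
      intro q hq
      rw [frozen hw a q hq, frozen hw b q hq]
    exact (hupd (orb U F a) (orb U F b) w n m n m' hagree ha hval hb') rfl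

/-- Every slot on the minimal row is eventually constant. -/
theorem row_conv
    (hupd : ∀ (f g : Fam K) (v : Row K) (n m h l : ℕ),
      (∀ w : Row K, LexLt w v → f w = g w) →
      U f = some (v, n, m) → g v n = m → U g = some (v, h, l) → h ≠ n)
    {F : Fam K} {w : Row K}
    (hw : ∀ s v n m, U (orb U F s) = some (v, n, m) → ¬ LexLt v w) (j : ℕ) :
    ∃ T, ∀ s, T ≤ s → orb U F s w j = orb U F T w j := by
  -- value at (w,j) changes only at a (w,j)-instruction
  have hstep : ∀ t, (∀ m, U (orb U F t) ≠ some (w, j, m)) → orb U F (t+1) w j = orb U F t w j := by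
    intro t hne
    rw [orb_succ]
    cases hU : U (orb U F t) with
    | none => rw [stepF_none hU]
    | some q =>
      obtain ⟨v', n', m''⟩ := q
      by_cases hv'w : v' = w
      · subst hv'w
        have hn' : j ≠ n' := by
          intro h
          exact hne m'' (by rw [hU, h])
        rw [stepF_slot_other hU hn']
      · have : LexLt w v' := by
          rcases lex_trichotomy v' w with h | h | h
          · exact absurd h (hw t v' n' m'' hU)
          · exact absurd h hv'w
          · exact h
        rw [stepF_below hU this]
  by_cases hev : ∃ s₀ m, U (orb U F s₀) = some (w, j, m)
  · obtain ⟨s₀, m, hm⟩ := hev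
    refine ⟨s₀ + 1, fun s hs => ?_⟩
    -- both equal to m
    have hconst : ∀ t, s₀ + 1 ≤ t → orb U F t w j = orb U F (s₀+1) w j := by
      intro t
      induction t with
      | zero => omega
      | succ t iht =>
        intro h1
        rcases Nat.lt_or_ge s₀ t with h2 | h2
        · rw [hstep t, iht (by omega)]
          intro m' hm'
          exact distinct_slots hupd hw t s₀ h2 j m m' hm hm'
        · have : t = s₀ := by omega
          subst this; rfl
    exact hconst s hs
  · push_neg at hev
    refine ⟨0, fun s _ => ?_⟩
    induction s with
    | zero => rfl
    | succ s ih =>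
      rw [hstep s, ih]
      · omega
      · exact fun m => hev s m

end ZT

namespace ZT
variable {K : ℕ}
variable {U : Fam K → Option (Row K × ℕ × ℕ)}

/-! ### Convergence and continuity -/

/-- Pointwise eventual agreement of a sequence of families with a limit family. -/
def PConv (g : ℕ → Fam K) (G : Fam K) : Prop :=
  ∀ p : Row K, ∀ j : ℕ, ∃ T, ∀ t, T ≤ t → g t p j = G p j

theorem evConst
    (hcont : ∀ f : Fam K, ∃ A : Finset (Row K × ℕ),
      ∀ g : Fam K, (∀ p ∈ A, g p.1 p.2 = f p.1 p.2) → U g = U f)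
    {g : ℕ → Fam K} {G : Fam K} (h : PConv g G) :
    ∃ T, ∀ t, T ≤ t → U (g t) = U G := by
  obtain ⟨A, hA⟩ := hcont G
  have : ∃ T, ∀ t, T ≤ t → ∀ q ∈ A, g t q.1 q.2 = G q.1 q.2 := by
    classical
    refine ⟨A.sup (fun q => (h q.1 q.2).choose), fun t ht q hq => ?_⟩
    refine (h q.1 q.2).choose_spec t (le_trans ?_ ht)
    exact Finset.le_sup (f := fun q => (h q.1 q.2).choose) hq
  obtain ⟨T, hT⟩ := this
  exact ⟨T, fun t ht => hA (g t) (hT t ht)⟩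

theorem step_conv {g : ℕ → Fam K} {G : Fam K} (h : PConv g G)
    {T₀ : ℕ} (hU : ∀ t, T₀ ≤ t → U (g t) = U G) :
    PConv (fun t => stepF U (g t)) (stepF U G) := by
  intro p j
  cases hUG : U G with
  | none =>
    obtain ⟨T, hT⟩ := h p j
    refine ⟨max T T₀, fun t ht => ?_⟩
    show stepF U (g t) p j = stepF U G p j
    rw [stepF_none (show U (g t) = none by rw [hU t (le_trans (le_max_right _ _) ht), hUG]),
      stepF_none hUG]
    exact hT t (le_trans (le_max_left _ _) ht)
  | some q =>
    obtain ⟨v, n, m⟩ := q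
    obtain ⟨T, hT⟩ := h p j
    refine ⟨max T T₀, fun t ht => ?_⟩
    show stepF U (g t) p j = stepF U G p j
    have hUt : U (g t) = some (v, n, m) := by
      rw [hU t (le_trans (le_max_right _ _) ht), hUG]
    have hTt := hT t (le_trans (le_max_left _ _) ht)
    rcases lex_trichotomy p v with hlt | rfl | hgt
    · rw [stepF_below hUt hlt, stepF_below hUG hlt]; exact hTt
    · by_cases hj : j = n
      · subst hj; rw [stepF_slot hUt, stepF_slot hUG]
      · rw [stepF_slot_other hUt hj, stepF_slot_other hUG hj]; exact hTt
    · rw [stepF_above hUt hgt, stepF_above hUG hgt]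

theorem limConv
    (hcont : ∀ f : Fam K, ∃ A : Finset (Row K × ℕ),
      ∀ g : Fam K, (∀ p ∈ A, g p.1 p.2 = f p.1 p.2) → U g = U f)
    {G : ℕ → Fam K} {c : ℕ → ℕ} {Y : Fam K}
    (hY : PConv (fun t => orb U (G t) (c t)) Y) :
    ∀ r, PConv (fun t => orb U (G t) (c t + r)) (orb U Y r) ∧
      (∃ T, ∀ t, T ≤ t → U (orb U (G t) (c t + r)) = U (orb U Y r)) := by
  intro r
  induction r with
  | zero =>
    constructor
    · simpa [orb_zero] using hY
    · simpa [orb_zero] using evConst hcont hY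
  | succ r ih =>
    obtain ⟨ihc, T₀, hT₀⟩ := ih
    have hstep := step_conv ihc (T₀ := T₀) hT₀
    constructor
    · intro p j
      obtain ⟨T, hT⟩ := hstep p j
      exact ⟨T, fun t ht => hT t ht⟩
    · obtain ⟨T, hT⟩ := evConst hcont hstep
      exact ⟨T, fun t ht => hT t ht⟩

end ZT

namespace ZT
variable {K : ℕ}

attribute [local instance] Classical.propDecidable

/-! ### Stage index type and its well-founded order -/

def RB : Option (Row K) → Row K → Prop
  | some v, p => LexLt p v
  | none, _ => True

def RR : Option (Row K) → Option (Row K) → Prop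
  | some x, some y => LexLt x y
  | some _, none => True
  | none, _ => False

theorem RR_wf : WellFounded (RR : Option (Row K) → Option (Row K) → Prop) := by
  have hsome : ∀ v : Row K, Acc RR (some v) := by
    intro v
    induction v using lex_wf.induction with
    | _ v ih =>
      constructor
      intro j hj
      match j, hj with
      | some y, hj => exact ih y hj
  constructor
  intro a
  match a with
  | some v => exact hsome v
  | none =>
    constructor
    intro j hj
    match j, hj with
    | some y, _ => exact hsome y

theorem RB_down {i : Option (Row K)} {p q : Row K} (h : LexLt p q) (hq : RB i q) : RB i p := by
  match i with
  | none => trivial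
  | some v => exact lex_trans h hq

theorem RB_of_RR {i : Option (Row K)} {y : Row K} (h : RR (some y) i) {p : Row K}
    (hp : LexLt p y) : RB i p := by
  match i with
  | none => trivial
  | some v => exact lex_trans hp h

theorem rsucc_lt_of_lt_limit {v p : Row K} (hl : v (Fin.last K) = 0) (hp : LexLt p v) :
    LexLt (rsucc p) v := by
  rcases lex_trichotomy (rsucc p) v with h | h | h
  · exact h
  · exfalso
    have : v (Fin.last K) = p (Fin.last K) + 1 := by rw [← h, rsucc_last]
    omega
  · exact absurd (lexle_trans_lt (lexle_of_lt_rsucc h) hp) (lex_irrefl v)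

/-! ### Least-witness helper -/

noncomputable def nfind (P : ℕ → Prop) (h : ∃ n, P n) : ℕ :=
  @Nat.find P (fun n => Classical.propDecidable _) h

theorem nfind_spec (P : ℕ → Prop) (h : ∃ n, P n) : P (nfind P h) :=
  @Nat.find_spec P (fun n => Classical.propDecidable _) h

theorem nfind_min' (P : ℕ → Prop) (h : ∃ n, P n) {m : ℕ} (hm : P m) : nfind P h ≤ m :=
  @Nat.find_min' P (fun n => Classical.propDecidable _) h m hm

/-! ### The stage construction -/

variable (U : Fam K → Option (Row K × ℕ × ℕ))

/-- Eventual value of a position along an orbit (when it stabilizes). -/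
noncomputable def limv (F : Fam K) (x : Row K) (j : ℕ) : ℕ :=
  if h : ∃ T, ∀ s, T ≤ s → orb U F s x j = orb U F T x j then orb U F h.choose x j else 0

/-- The limit family built from a stage function at a limit stage. -/
noncomputable def limFam (i : Option (Row K)) (st : ∀ j, RR j i → Fam K)
    (hp : ∀ p : Row K, RB i p → RR (some (rsucc p)) i) : Fam K :=
  fun p j => if h : RB i p then st (some (rsucc p)) (hp p h) p j else 0

/-- The successor-stage family in the infinite case. -/
noncomputable def sucFam (F : Fam K) (x : Row K) : Fam K :=
  fun p j => if LexLt p x then F p j else if p = x then limv U F x j else 0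

noncomputable def stageBody (i : Option (Row K)) (rec : ∀ j, RR j i → Fam K) : Fam K :=
  match i, rec with
  | some v, rec =>
    if h0 : v = (fun _ => 0) then (fun _ _ => 0)
    else if hs : v (Fin.last K) ≠ 0 then
      let F := rec (some (rpred v)) (rpred_lt hs)
      if hfin : ∃ N, ∀ s, N ≤ s → ∀ n m, U (orb U F s) ≠ some (rpred v, n, m) then
        orb U F (nfind _ hfin)
      else
        sucFam U F (rpred v)
    else
      have hl : v (Fin.last K) = 0 := not_not.mp hs
      have pf : ∀ t : ℕ, RR (some (rsucc (chainL v t))) (some v) :=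
        fun t => chainL_rsucc_lt h0 hl t
      if hb : ∃ t₀, ∀ t, t₀ ≤ t →
          rec (some (rsucc (chainL v t))) (pf t) = rec (some (rsucc (chainL v t₀))) (pf t₀) then
        rec (some (rsucc (chainL v (nfind _ hb)))) (pf _)
      else
        limFam (some v) rec (fun p h => rsucc_lt_of_lt_limit hl h)
  | none, rec =>
    if hb : ∃ t₀, ∀ t, t₀ ≤ t →
        rec (some (rsucc (chainT t))) trivial = rec (some (rsucc (chainT t₀))) trivial then
      rec (some (rsucc (chainT (nfind _ hb)))) trivial
    else
      limFam none rec (fun p _ => trivial)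

noncomputable def stage : Option (Row K) → Fam K :=
  (RR_wf).fix (stageBody U)

theorem stage_eq (i : Option (Row K)) :
    stage U i = stageBody U i (fun j _ => stage U j) :=
  WellFounded.fix_eq _ _ _

end ZT

namespace ZT
variable {K : ℕ}
variable (U : Fam K → Option (Row K × ℕ × ℕ))

/-! ### Unfolding lemmas for `stage` -/

theorem stage_zero : stage U (some (fun _ => (0:ℕ))) = fun _ _ => 0 := by
  rw [stage_eq]
  simp only [stageBody]
  rw [dif_pos trivial]

theorem stage_succ_fin {v : Row K} (hs : v (Fin.last K) ≠ 0)
    (hfin : ∃ N, ∀ s, N ≤ s → ∀ n m,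
      U (orb U (stage U (some (rpred v))) s) ≠ some (rpred v, n, m)) :
    stage U (some v) = orb U (stage U (some (rpred v))) (nfind _ hfin) := by
  have h0 : v ≠ (fun _ => 0) := by
    intro h; exact hs (by rw [h])
  rw [stage_eq]
  simp only [stageBody]
  rw [dif_neg h0, dif_pos hs, dif_pos hfin]

theorem stage_succ_inf {v : Row K} (hs : v (Fin.last K) ≠ 0)
    (hinf : ¬ ∃ N, ∀ s, N ≤ s → ∀ n m,
      U (orb U (stage U (some (rpred v))) s) ≠ some (rpred v, n, m)) :
    stage U (some v) = sucFam U (stage U (some (rpred v))) (rpred v) := by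
  have h0 : v ≠ (fun _ => 0) := by
    intro h; exact hs (by rw [h])
  rw [stage_eq]
  simp only [stageBody]
  rw [dif_neg h0, dif_pos hs, dif_neg hinf]

theorem stage_lim_stab {v : Row K} (h0 : v ≠ (fun _ => 0)) (hl : v (Fin.last K) = 0)
    (hb : ∃ t₀, ∀ t, t₀ ≤ t →
      stage U (some (rsucc (chainL v t))) = stage U (some (rsucc (chainL v t₀)))) :
    stage U (some v) = stage U (some (rsucc (chainL v (nfind _ hb)))) := by
  rw [stage_eq]
  simp only [stageBody]
  rw [dif_neg h0, dif_neg (not_not.mpr hl), dif_pos hb]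

theorem stage_lim_diag {v : Row K} (h0 : v ≠ (fun _ => 0)) (hl : v (Fin.last K) = 0)
    (hb : ¬ ∃ t₀, ∀ t, t₀ ≤ t →
      stage U (some (rsucc (chainL v t))) = stage U (some (rsucc (chainL v t₀)))) :
    stage U (some v) = fun p j => if LexLt p v then stage U (some (rsucc p)) p j else 0 := by
  rw [stage_eq]
  simp only [stageBody]
  rw [dif_neg h0, dif_neg (not_not.mpr hl), dif_neg hb]
  funext p j
  simp only [limFam, RB]
  by_cases h : LexLt p v
  · exact (dif_pos h).trans (if_pos h).symm
  · exact (dif_neg h).trans (if_neg h).symm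

theorem stage_top_stab
    (hb : ∃ t₀, ∀ t, t₀ ≤ t →
      stage U (some (rsucc (chainT t))) = stage U (some (rsucc (chainT t₀)))) :
    stage U (none : Option (Row K)) = stage U (some (rsucc (chainT (nfind _ hb)))) := by
  rw [stage_eq]
  simp only [stageBody]
  rw [dif_pos hb]

theorem stage_top_diag
    (hb : ¬ ∃ t₀, ∀ t, t₀ ≤ t →
      stage U (some (rsucc (chainT t))) = stage U (some (rsucc (chainT t₀)))) :
    stage U (none : Option (Row K)) = fun p j => stage U (some (rsucc p)) p j := by
  rw [stage_eq]
  simp only [stageBody]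
  rw [dif_neg hb]
  funext p j
  simp only [limFam, RB]
  exact dif_pos trivial

end ZT

namespace ZT
variable {K : ℕ}

attribute [local instance] Classical.propDecidable

theorem lexlt_trans_le {a b c : Row K} (h1 : LexLt a b) (h2 : LexLe b c) : LexLt a c := by
  rcases h2 with rfl | h2
  · exact h1
  · exact lex_trans h1 h2

theorem rsucc_le_of_lt {p y : Row K} (h : LexLt p y) : LexLe (rsucc p) y := by
  rcases lex_trichotomy (rsucc p) y with h' | h' | h'
  · exact Or.inr h'
  · exact Or.inl h'
  · exact absurd (lexle_trans_lt (lexle_of_lt_rsucc h') h) (lex_irrefl _)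

theorem RR_some_iff {i : Option (Row K)} {y : Row K} : RR (some y) i ↔ RB i y := by
  cases i <;> simp [RR, RB]

theorem not_lexle_of_not_lt_rsucc {a u : Row K} (h : ¬ LexLt a (rsucc u)) : ¬ LexLe a u :=
  fun h' => h (lt_rsucc_of_le h')

variable {U : Fam K → Option (Row K × ℕ × ℕ)}

/-- The full invariant carried through the well-founded recursion. -/
def Inv (U : Fam K → Option (Row K × ℕ × ℕ)) (i : Option (Row K)) : Prop :=
  (∀ s v n m, U (orb U (stage U i) s) = some (v, n, m) → ¬ RB i v) ∧
  (∀ j, RR j i → ∀ p, RB j p → stage U i p = stage U j p)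

section LimInv

variable
  {i : Option (Row K)}
  (IH : ∀ j, RR j i → Inv U j)
  {w : ℕ → Row K}
  (hwR : ∀ t, RR (some (rsucc (w t))) i)
  (hcof : ∀ p, RB i p → ∃ t, LexLe p (w t))
  (hmono : ∀ t t', t ≤ t' → LexLe (w t) (w t'))

include IH hwR hcof hmono

/-- The Q-lemma: if some chain stage's orbit never instructs a row below `i`,
then all stages strictly between it and `i` are equal to it. -/
theorem Qlem (τ : ℕ)
    (Hno : ¬ ∃ s v' n m, U (orb U (stage U (some (rsucc (w τ)))) s) = some (v', n, m) ∧ RB i v') :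
    ∀ y, RB i y → LexLt (w τ) y → stage U (some y) = stage U (some (rsucc (w τ))) := by
  intro y
  induction y using lex_wf.induction with
  | _ y IHy =>
    intro hyB hylt
    by_cases h0y : y = (fun _ => 0)
    · exact absurd (h0y ▸ hylt) (not_lexlt_zero _)
    by_cases hsy : y (Fin.last K) ≠ 0
    · -- successor row
      have hvy : y = rsucc (rpred y) := (rsucc_rpred hsy).symm
      have hle : LexLe (w τ) (rpred y) := lexle_of_lt_rsucc (hvy ▸ hylt)
      rcases hle with heq | hlt
      · rw [hvy, ← heq]
      · have hx : stage U (some (rpred y)) = stage U (some (rsucc (w τ))) :=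
          IHy (rpred y) (rpred_lt hsy) (RB_down (rpred_lt hsy) hyB) hlt
        have hP0 : ∀ s, 0 ≤ s → ∀ n m,
            U (orb U (stage U (some (rpred y))) s) ≠ some (rpred y, n, m) := by
          intro s _ n m hc
          exact Hno ⟨s, rpred y, n, m, by rw [← hx]; exact hc, RB_down (rpred_lt hsy) hyB⟩
        have hfin : ∃ N, ∀ s, N ≤ s → ∀ n m,
            U (orb U (stage U (some (rpred y))) s) ≠ some (rpred y, n, m) := ⟨0, hP0⟩
        have h2 : nfind _ hfin = 0 := Nat.le_zero.mp (nfind_min' _ hfin hP0)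
        rw [stage_succ_fin U hsy hfin, h2, orb_zero, hx]
    · -- limit row
      have hly : y (Fin.last K) = 0 := not_not.mp hsy
      obtain ⟨s₁, hs₁⟩ := chainL_cofinal h0y hly hylt
      have hst : ∀ s, s₁ ≤ s →
          stage U (some (rsucc (chainL y s))) = stage U (some (rsucc (w τ))) := by
        intro s hs
        have hle : LexLe (w τ) (chainL y s) := lexle_trans hs₁ (chainL_mono h0y hly hs)
        exact IHy (rsucc (chainL y s)) (chainL_rsucc_lt h0y hly s)
          (RB_down (chainL_rsucc_lt h0y hly s) hyB) (lt_rsucc_of_le hle)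
      have Hb : ∃ t₀, ∀ t, t₀ ≤ t →
          stage U (some (rsucc (chainL y t))) = stage U (some (rsucc (chainL y t₀))) :=
        ⟨s₁, fun t ht => by rw [hst t ht, hst s₁ (le_refl _)]⟩
      rw [stage_lim_stab U h0y hly Hb]
      have hspec := nfind_spec _ Hb
      have h3 := hspec (max (nfind _ Hb) s₁) (le_max_left _ _)
      rw [← h3, hst _ (le_max_right _ _)]

/-- Main lemma for limit stages (also used for the top stage). -/
theorem lim_inv
    (hcont : ∀ f : Fam K, ∃ A : Finset (Row K × ℕ),
      ∀ g : Fam K, (∀ p ∈ A, g p.1 p.2 = f p.1 p.2) → U g = U f)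
    (hunf_stab : ∀ hb : (∃ t₀, ∀ t, t₀ ≤ t →
        stage U (some (rsucc (w t))) = stage U (some (rsucc (w t₀)))),
      stage U i = stage U (some (rsucc (w (nfind _ hb)))))
    (hunf_diag : (¬ ∃ t₀, ∀ t, t₀ ≤ t →
        stage U (some (rsucc (w t))) = stage U (some (rsucc (w t₀)))) →
      stage U i = fun p j => if RB i p then stage U (some (rsucc p)) p j else 0) :
    Inv U i := by
  by_cases hb : ∃ t₀, ∀ t, t₀ ≤ t →
      stage U (some (rsucc (w t))) = stage U (some (rsucc (w t₀)))
  · -- stabilizing chain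
    have hspec := nfind_spec _ hb
    have hSi := hunf_stab hb
    constructor
    · intro s v' n m h hBv'
      obtain ⟨t₁, ht₁⟩ := hcof v' hBv'
      set t := max (nfind _ hb) t₁ with htdef
      have hEq : stage U i = stage U (some (rsucc (w t))) := by
        rw [hSi, hspec t (le_max_left _ _)]
      have hA := (IH (some (rsucc (w t))) (hwR t)).1 s v' n m (by rw [← hEq]; exact h)
      have : ¬ LexLe v' (w t) := not_lexle_of_not_lt_rsucc hA
      exact this (lexle_trans ht₁ (hmono t₁ t (le_max_right _ _)))
    · intro j hj p hp
      match j, hj with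
      | some y, hj =>
        have hyB : RB i y := RR_some_iff.mp hj
        obtain ⟨t₁, ht₁⟩ := hcof y hyB
        set t := max (nfind _ hb) t₁ with htdef
        have hEq : stage U i = stage U (some (rsucc (w t))) := by
          rw [hSi, hspec t (le_max_left _ _)]
        have hyle : LexLe y (w t) := lexle_trans ht₁ (hmono t₁ t (le_max_right _ _))
        have hRRy : RR (some y) (some (rsucc (w t))) := lt_rsucc_of_le hyle
        rw [hEq]
        exact (IH (some (rsucc (w t))) (hwR t)).2 (some y) hRRy p hp
  · -- diagonal case
    have hX := hunf_diag hb
    -- every chain stage's orbit eventually instructs a row below i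
    have Hwin : ∀ τ, ∃ s v' n m,
        U (orb U (stage U (some (rsucc (w τ)))) s) = some (v', n, m) ∧ RB i v' := by
      intro τ
      by_contra Hno
      apply hb
      refine ⟨τ, fun t ht => ?_⟩
      exact Qlem IH hwR hcof hmono τ Hno (rsucc (w t)) (RR_some_iff.mp (hwR t))
        (lt_rsucc_of_le (hmono τ t ht))
    -- snapshots right after the first below-i instruction
    classical
    set W : ℕ → Fam K := fun t => stage U (some (rsucc (w t))) with hWdef
    have hsel : ∀ t, ∃ s, ∃ v' n m,
        U (orb U (W t) s) = some (v', n, m) ∧ RB i v' := fun t => Hwin t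
    set c : ℕ → ℕ := fun t => (hsel t).choose + 1 with hcdef
    have hYconv : PConv (fun t => orb U (W t) (c t)) (stage U i) := by
      intro p j
      by_cases hRBp : RB i p
      · obtain ⟨t₁, ht₁⟩ := hcof p hRBp
        refine ⟨t₁, fun t ht => ?_⟩
        have hple : LexLe p (w t) := lexle_trans ht₁ (hmono t₁ t ht)
        have hplt : LexLt p (rsucc (w t)) := lt_rsucc_of_le hple
        have hfro : orb U (W t) (c t) p = W t p :=
          frozen (fun s v n m hc => (IH (some (rsucc (w t))) (hwR t)).1 s v n m hc) _ p hplt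
        have hWp : W t p = stage U (some (rsucc p)) p := by
          rcases rsucc_mono hple with heq | hlt
          · rw [hWdef]; rw [heq]
          · exact (IH (some (rsucc (w t))) (hwR t)).2 (some (rsucc p)) hlt p (lt_rsucc p)
        show orb U (W t) (c t) p j = stage U i p j
        rw [hfro, hWp, hX]
        simp only [if_pos hRBp]
      · refine ⟨0, fun t _ => ?_⟩
        obtain ⟨v', n, m, hev, hBv'⟩ := (hsel t).choose_spec
        have hvp : LexLt v' p := by
          rcases lex_trichotomy v' p with h' | rfl | h'
          · exact h'
          · exact absurd hBv' hRBp
          · exact absurd (RB_down h' hBv') hRBp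
        have : orb U (W t) (c t) p = fun _ => 0 := by
          rw [hcdef]
          show orb U (W t) ((hsel t).choose + 1) p = fun _ => 0
          rw [orb_succ]
          exact stepF_above hev hvp
        show orb U (W t) (c t) p j = stage U i p j
        rw [this, hX]
        simp only [if_neg hRBp]
    have HLC := limConv hcont hYconv
    constructor
    · intro s v' n m h hBv'
      obtain ⟨T, hT⟩ := (HLC s).2
      have hvals : ∀ t, T ≤ t → ¬ LexLe v' (w t) := by
        intro t ht
        have := hT t ht
        rw [h] at this
        exact not_lexle_of_not_lt_rsucc
          ((IH (some (rsucc (w t))) (hwR t)).1 (c t + s) v' n m this)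
      obtain ⟨t₁, ht₁⟩ := hcof v' hBv'
      exact hvals (max T t₁) (le_max_left _ _)
        (lexle_trans ht₁ (hmono t₁ _ (le_max_right _ _)))
    · intro j hj p hp
      match j, hj with
      | some y, hj =>
        have hyB : RB i y := RR_some_iff.mp hj
        have hpB : RB i p := RB_down hp hyB
        have h1 : stage U i p = stage U (some (rsucc p)) p := by
          rw [hX]
          funext j'
          simp only [if_pos hpB]
        have h2 : stage U (some y) p = stage U (some (rsucc p)) p := by
          rcases rsucc_le_of_lt hp with heq | hlt
          · rw [heq]
          · exact (IH (some y) hj).2 (some (rsucc p)) hlt p (lt_rsucc p)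
        rw [h1, h2]

end LimInv

end ZT

namespace ZT
variable {K : ℕ}

attribute [local instance] Classical.propDecidable

variable {U : Fam K → Option (Row K × ℕ × ℕ)}

section SuccInv

variable
  (hcont : ∀ f : Fam K, ∃ A : Finset (Row K × ℕ),
    ∀ g : Fam K, (∀ p ∈ A, g p.1 p.2 = f p.1 p.2) → U g = U f)
  (hupd : ∀ (f g : Fam K) (v : Row K) (n m h l : ℕ),
    (∀ w : Row K, LexLt w v → f w = g w) →
    U f = some (v, n, m) → g v n = m → U g = some (v, h, l) → h ≠ n)

include hcont hupd in
/-- Invariant at successor stages. -/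
theorem succ_inv {v : Row K} (hs : v (Fin.last K) ≠ 0)
    (IHx : Inv U (some (rpred v)))
    (IH : ∀ j, RR j (some v) → Inv U j) : Inv U (some v) := by
  set x := rpred v with hxdef
  set F := stage U (some x) with hFdef
  have hvx : v = rsucc x := (rsucc_rpred hs).symm
  have A_x : ∀ s v' n m, U (orb U F s) = some (v', n, m) → ¬ LexLt v' x :=
    fun s v' n m h => IHx.1 s v' n m h
  have hnotB : ∀ v' : Row K, ¬ LexLt v' x → v' ≠ x → ¬ RB (some v) v' := by
    intro v' h1 h2 hc
    have hc' : LexLt v' (rsucc x) := hvx ▸ hc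
    rcases lexlt_rsucc_iff.mp hc' with heq | hlt
    · exact h2 heq
    · exact h1 hlt
  by_cases hfin : ∃ N, ∀ s, N ≤ s → ∀ n m, U (orb U F s) ≠ some (x, n, m)
  · -- finitely many x-events
    have hSt : stage U (some v) = orb U F (nfind _ hfin) := stage_succ_fin U hs hfin
    constructor
    · intro s v' n m h
      rw [hSt, orb_add] at h
      refine hnotB v' (A_x _ v' n m h) ?_
      intro heq
      exact (nfind_spec _ hfin (nfind _ hfin + s) (by omega) n m) (heq ▸ h)
    · intro j hj p hp
      match j, hj with
      | some y, hj =>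
        have hylex : LexLe y x := lexlt_rsucc_iff.mp (hvx ▸ hj)
        have hpx : LexLt p x := lexlt_trans_le hp hylex
        have h1 : stage U (some v) p = F p := by
          rw [hSt]
          exact frozen A_x _ p hpx
        rw [h1]
        rcases hylex with heq | hlt
        · rw [heq]
        · exact IHx.2 (some y) hlt p hp
  · -- infinitely many x-events
    have hSt : stage U (some v) = sucFam U F x := stage_succ_inf U hs hfin
    push_neg at hfin
    have hinf' : ∀ N, ∃ s, N ≤ s ∧ ∃ n m, U (orb U F s) = some (x, n, m) := by
      intro N
      obtain ⟨s, hsN, n, m, h⟩ := hfin N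
      exact ⟨s, hsN, n, m, h⟩
    set σ : ℕ → ℕ := fun i =>
      Nat.rec ((hinf' 0).choose) (fun _ prev => (hinf' (prev + 1)).choose) i with hσdef
    have hσev : ∀ t, ∃ n m, U (orb U F (σ t)) = some (x, n, m) := by
      intro t
      cases t with
      | zero => exact (hinf' 0).choose_spec.2
      | succ t => exact (hinf' (σ t + 1)).choose_spec.2
    have hσmono : ∀ t, σ t < σ (t + 1) := by
      intro t
      have := (hinf' (σ t + 1)).choose_spec.1
      show σ t < (hinf' (σ t + 1)).choose
      omega
    have hσge : ∀ t, t ≤ σ t := by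
      intro t
      induction t with
      | zero => omega
      | succ t ih => have := hσmono t; omega
    have hconv : PConv (fun t => orb U F (σ t + 1)) (sucFam U F x) := by
      intro p j
      rcases lex_trichotomy p x with hlt | heq | hgt
      · refine ⟨0, fun t _ => ?_⟩
        show orb U F (σ t + 1) p j = sucFam U F x p j
        rw [frozen A_x _ p hlt]
        show F p j = sucFam U F x p j
        simp only [sucFam, if_pos hlt]
      · subst heq
        have hrc : ∃ T, ∀ s, T ≤ s → orb U F s x j = orb U F T x j :=
          row_conv hupd A_x j
        refine ⟨hrc.choose, fun t ht => ?_⟩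
        show orb U F (σ t + 1) x j = sucFam U F x x j
        have hval : sucFam U F x x j = orb U F hrc.choose x j := by
          simp only [sucFam, if_neg (lex_irrefl x), if_pos rfl]
          rw [limv, dif_pos hrc]
          rw [if_pos trivial]
        rw [hval]
        exact hrc.choose_spec (σ t + 1) (by have := hσge t; omega)
      · refine ⟨0, fun t _ => ?_⟩
        show orb U F (σ t + 1) p j = sucFam U F x p j
        obtain ⟨n, m, hev⟩ := hσev t
        rw [orb_succ, stepF_above hev hgt]
        simp only [sucFam, if_neg (lex_asymm hgt),
          if_neg (show p ≠ x from fun hpe => lex_irrefl x (hpe ▸ hgt))]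
    have HLC := limConv hcont hconv
    constructor
    · intro s v' n m h
      rw [hSt] at h
      obtain ⟨T, hT⟩ := (HLC s).2
      have hev : ∀ t, T ≤ t → U (orb U F (σ t + 1 + s)) = some (v', n, m) := by
        intro t ht
        rw [hT t ht, h]
      refine hnotB v' (A_x _ v' n m (hev T (le_refl T))) ?_
      rintro rfl
      have hab : σ T + 1 + s < σ (T + 1) + 1 + s := by
        have := hσmono T; omega
      exact distinct_slots hupd A_x (σ (T+1) + 1 + s) (σ T + 1 + s) hab n m m
        (hev T (le_refl T)) (hev (T+1) (by omega))
    · intro j hj p hp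
      match j, hj with
      | some y, hj =>
        have hylex : LexLe y x := lexlt_rsucc_iff.mp (hvx ▸ hj)
        have hpx : LexLt p x := lexlt_trans_le hp hylex
        have h1 : stage U (some v) p = F p := by
          rw [hSt]
          funext j'
          simp only [sucFam, if_pos hpx]
        rw [h1]
        rcases hylex with heq | hlt
        · rw [heq]
        · exact IHx.2 (some y) hlt p hp

end SuccInv

end ZT

namespace ZT
variable {K : ℕ}

attribute [local instance] Classical.propDecidable

variable {U : Fam K → Option (Row K × ℕ × ℕ)}

theorem main_inv
    (hcont : ∀ f : Fam K, ∃ A : Finset (Row K × ℕ),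
      ∀ g : Fam K, (∀ p ∈ A, g p.1 p.2 = f p.1 p.2) → U g = U f)
    (hupd : ∀ (f g : Fam K) (v : Row K) (n m h l : ℕ),
      (∀ w : Row K, LexLt w v → f w = g w) →
      U f = some (v, n, m) → g v n = m → U g = some (v, h, l) → h ≠ n) :
    ∀ i, Inv U i := by
  intro i
  induction i using RR_wf.induction with
  | _ i IH =>
    match i with
    | some v =>
      by_cases h0 : v = (fun _ => 0)
      · subst h0
        constructor
        · intro s v' n m h hB
          exact not_lexlt_zero v' hB
        · intro j hj p hp
          match j, hj with
          | some y, hj => exact absurd hj (not_lexlt_zero y)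
      · by_cases hs : v (Fin.last K) ≠ 0
        · exact succ_inv hcont hupd hs (IH (some (rpred v)) (rpred_lt hs)) IH
        · have hl : v (Fin.last K) = 0 := not_not.mp hs
          refine lim_inv IH (w := chainL v)
            (fun t => chainL_rsucc_lt h0 hl t)
            (fun p hp => chainL_cofinal h0 hl hp)
            (fun t t' h => chainL_mono h0 hl h)
            hcont
            (fun hb => stage_lim_stab U h0 hl hb)
            (fun hb => ?_)
          rw [stage_lim_diag U h0 hl hb]
          funext p j
          show (if LexLt p v then _ else _) = ite (RB (some v) p) _ _
          congr 1
    | none =>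
      refine lim_inv IH (w := chainT)
        (fun _ => trivial)
        (fun p _ => chainT_cofinal p)
        (fun t t' h => chainT_mono h)
        hcont
        (fun hb => stage_top_stab U hb)
        (fun hb => ?_)
      rw [stage_top_diag U hb]
      funext p j
      simp [RB]

theorem no_zero_false
    (hcont : ∀ f : Fam K, ∃ A : Finset (Row K × ℕ),
      ∀ g : Fam K, (∀ p ∈ A, g p.1 p.2 = f p.1 p.2) → U g = U f)
    (hupd : ∀ (f g : Fam K) (v : Row K) (n m h l : ℕ),
      (∀ w : Row K, LexLt w v → f w = g w) →
      U f = some (v, n, m) → g v n = m → U g = some (v, h, l) → h ≠ n)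
    (hnz : ∀ f : Fam K, U f ≠ none) : False := by
  have h := (main_inv hcont hupd none).1
  cases hq : U (stage U (none : Option (Row K))) with
  | none => exact hnz _ hq
  | some q =>
    exact h 0 q.1 q.2.1 q.2.2 (by rw [orb_zero]; rw [hq]) trivial

end ZT


/-- Zero Theorem for update procedures of ordinal `ω^k` (with `k ≥ 1`,
identifying `ω^k` with `ℕ^k` ordered lexicographically): every continuous map
`U` on `ℕ^k`-indexed families of functions satisfying the update condition
with respect to the lexicographic order has a finite zero. -/
theorem zero_theorem_omega_pow_k_update_procedure (k : ℕ) (hk : 1 ≤ k)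
    (U : ((Fin k → ℕ) → ℕ → ℕ) → Option ((Fin k → ℕ) × ℕ × ℕ))
    -- continuity
    (hcont : ∀ f : (Fin k → ℕ) → ℕ → ℕ, ∃ A : Finset ((Fin k → ℕ) × ℕ),
      ∀ g : (Fin k → ℕ) → ℕ → ℕ, (∀ p ∈ A, g p.1 p.2 = f p.1 p.2) → U g = U f)
    -- update condition w.r.t. the lexicographic order
    (hupd : ∀ (f g : (Fin k → ℕ) → ℕ → ℕ) (v : Fin k → ℕ) (n m h l : ℕ),
      (∀ w : Fin k → ℕ, LexLt w v → f w = g w) →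
      U f = some (v, n, m) → g v n = m → U g = some (v, h, l) → h ≠ n) :
    ∃ f : (Fin k → ℕ) → ℕ → ℕ,
      Set.Finite {p : (Fin k → ℕ) × ℕ | f p.1 p.2 ≠ 0} ∧ U f = none := by
  by_contra hno
  push_neg at hno
  obtain ⟨K, rfl⟩ : ∃ K, k = K + 1 := ⟨k - 1, by omega⟩
  have hnz : ∀ f : ZT.Fam K, U f ≠ none := by
    intro f hf
    obtain ⟨A, hA⟩ := hcont f
    classical
    set g : ZT.Fam K := fun p j => if (p, j) ∈ A then f p j else 0 with hg
    have hUg : U g = none := by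
      rw [hA g ?_]
      · exact hf
      · intro q hq
        show (if (q.1, q.2) ∈ A then f q.1 q.2 else 0) = f q.1 q.2
        rw [if_pos (by rwa [Prod.mk.eta])]
    have hfin : Set.Finite {p : ZT.Row K × ℕ | g p.1 p.2 ≠ 0} := by
      apply Set.Finite.subset A.finite_toSet
      intro q hq
      simp only [Set.mem_setOf_eq] at hq
      by_contra hqA
      apply hq
      show (if (q.1, q.2) ∈ A then f q.1 q.2 else 0) = 0
      rw [if_neg (by rwa [Prod.mk.eta])]
    exact hno g hfin hUg
  exact (ZT.no_zero_false hcont hupd hnz).elim
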